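/- Fix n ≥ 1 and let f ∈ ℝ^{2n} be the unit vector with f_i = 1/√(2n) for 1 ≤ i ≤ n and f_i = −1/√(2n) for n+1 ≤ i ≤ 2n. Let v ∈ ℝ^{2n} be a unit vector with ∑_i v_i = 0 and ⟨v, f⟩ ≠ 0. Then (1/(2n)) · min_{s ∈ {+1,−1}} |{ i : s·v_i·f_i ≤ 0 }| ≤ (1 − ⟨v,f⟩²)/⟨v,f⟩². -/
import Mathlib


open Finset

/-- From principal angle to sign error.
Let `f` be the unit block-sign vector on `ℝ^{2n}` and `v` a unit vector with zero coordinate sum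
and `⟨v,f⟩ ≠ 0`. Then the misclassification rate of the sign clustering induced by `v`
(minimized over the global sign flip) is at most `(1 − ⟨v,f⟩²)/⟨v,f⟩² = tan²∠(v,f)`. -/
theorem sign_error_bound (n : ℕ) (hn : 1 ≤ n) (v : Fin (2*n) → ℝ)
    (f : Fin (2*n) → ℝ)
    (hf : f = fun i : Fin (2*n) => if (i : ℕ) < n then 1 / Real.sqrt (2*n) else -(1 / Real.sqrt (2*n)))
    (hv_unit : ∑ i, v i ^ 2 = 1)
    (hv_sum : ∑ i, v i = 0)
    (hip : ∑ i, v i * f i ≠ 0) :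
    (1 / (2 * (n : ℝ))) *
        min ((univ.filter (fun i => v i * f i ≤ 0)).card : ℝ)
            ((univ.filter (fun i => -v i * f i ≤ 0)).card : ℝ)
      ≤ (1 - (∑ i, v i * f i) ^ 2) / (∑ i, v i * f i) ^ 2 := by
  set c := ∑ i, v i * f i with hc
  have hn' : (1:ℝ) ≤ n := by exact_mod_cast hn
  have h2n : (0:ℝ) < 2*n := by linarith
  have hfsq : ∀ i : Fin (2*n), f i ^ 2 = 1/(2*(n:ℝ)) := by
    intro i
    have hs : Real.sqrt (2*(n:ℝ)) ^ 2 = 2*(n:ℝ) := Real.sq_sqrt (by linarith)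
    have hsp : (0:ℝ) < Real.sqrt (2*(n:ℝ)) := Real.sqrt_pos.mpr h2n
    have hkey : (1 / Real.sqrt (2*(n:ℝ)))^2 = 1/(2*(n:ℝ)) := by
      rw [div_pow, one_pow, hs]
    rw [hf]
    by_cases h : (i:ℕ) < n <;> simp only [h, if_true, if_false, neg_sq] <;> exact hkey
  have hf2 : ∑ i, f i ^ 2 = 1 := by
    simp_rw [hfsq]
    rw [Finset.sum_const, Finset.card_univ, Fintype.card_fin, nsmul_eq_mul]
    push_cast
    field_simp
  have hexp : ∑ i, (v i - c * f i)^2 = 1 - c^2 := by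
    have h1 : ∀ i : Fin (2*n), (v i - c*f i)^2
        = v i^2 - 2*c*(v i*f i) + c^2 * f i^2 := fun i => by ring
    simp_rw [h1]
    rw [Finset.sum_add_distrib, Finset.sum_sub_distrib, ← Finset.mul_sum, ← Finset.mul_sum,
      hv_unit, ← hc, hf2]
    ring
  have hc2 : 0 < c^2 := pow_pos (abs_pos.mpr hip) 2 |>.trans_eq (by rw [sq_abs]) |>.trans_le le_rfl
  have key : ∀ S : Finset (Fin (2*n)), (∀ i ∈ S, c * (v i * f i) ≤ 0) →
      (S.card:ℝ)*(c^2/(2*(n:ℝ))) ≤ 1 - c^2 := by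
    intro S hS
    have h1 : ∑ _i ∈ S, (c^2/(2*(n:ℝ))) ≤ ∑ i ∈ S, (v i - c*f i)^2 := by
      apply Finset.sum_le_sum
      intro i hi
      have hfi := hfsq i
      have hsi := hS i hi
      have h2 : (v i - c*f i)^2 = v i^2 - 2*(c*(v i * f i)) + c^2 * f i^2 := by ring
      rw [h2, hfi]
      have h3 : c^2 * (1/(2*(n:ℝ))) = c^2/(2*(n:ℝ)) := by ring
      nlinarith [sq_nonneg (v i)]
    have h2 : ∑ i ∈ S, (v i - c*f i)^2 ≤ ∑ i, (v i - c*f i)^2 :=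
      Finset.sum_le_sum_of_subset_of_nonneg (Finset.subset_univ S) (fun i _ _ => sq_nonneg _)
    rw [Finset.sum_const, nsmul_eq_mul] at h1
    rw [hexp] at h2
    linarith
  set a := ((univ.filter (fun i : Fin (2*n) => v i * f i ≤ 0)).card : ℝ) with ha
  set b := ((univ.filter (fun i : Fin (2*n) => -v i * f i ≤ 0)).card : ℝ) with hb
  rw [le_div_iff₀ hc2]
  rcases lt_or_gt_of_ne hip with hneg | hpos
  · -- c < 0 : use the flipped clustering b
    have hSb : ∀ i ∈ (univ.filter (fun i : Fin (2*n) => -v i * f i ≤ 0)),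
        c * (v i * f i) ≤ 0 := by
      intro i hi
      rw [Finset.mem_filter] at hi
      have : 0 ≤ v i * f i := by nlinarith [hi.2]
      exact mul_nonpos_of_nonpos_of_nonneg (le_of_lt hneg) this
    have hkb := key _ hSb
    have hmin : min a b ≤ b := min_le_right _ _
    calc (1/(2*(n:ℝ))) * min a b * c^2
        ≤ (1/(2*(n:ℝ))) * b * c^2 := by
          apply mul_le_mul_of_nonneg_right
            (mul_le_mul_of_nonneg_left hmin (by positivity)) (sq_nonneg c)
      _ = b * (c^2/(2*(n:ℝ))) := by ring
      _ ≤ 1 - c^2 := hkb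
  · -- c > 0 : use the clustering a
    have hSa : ∀ i ∈ (univ.filter (fun i : Fin (2*n) => v i * f i ≤ 0)),
        c * (v i * f i) ≤ 0 := by
      intro i hi
      rw [Finset.mem_filter] at hi
      exact mul_nonpos_of_nonneg_of_nonpos (le_of_lt hpos) hi.2
    have hka := key _ hSa
    have hmin : min a b ≤ a := min_le_left _ _
    calc (1/(2*(n:ℝ))) * min a b * c^2
        ≤ (1/(2*(n:ℝ))) * a * c^2 := by
          apply mul_le_mul_of_nonneg_right
            (mul_le_mul_of_nonneg_left hmin (by positivity)) (sq_nonneg c)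
      _ = a * (c^2/(2*(n:ℝ))) := by ring
      _ ≤ 1 - c^2 := hka
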